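/- arXiv:0909.1434 — 2 statements merged into one kernel-verified Lean document; each statement's English description precedes it below -/
import Mathlib

section
/- Let F(r) be the free group on generators x_1,…,x_r, and let E : F(r) → ℤ⟨⟨X_1,…,X_r⟩⟩ be the Magnus expansion, i.e., the ring-homomorphism-induced map sending x_i ↦ 1 + X_i and x_i^{-1} ↦ 1 - X_i + X_i^2 - X_i^3 + ⋯ into the ring of formal power series in non-commuting variables X_1,…,X_r. Then an element w ∈ F(r) is the identity if and only if E(w) = 1. -/
open scoped BigOperators

/-- Convolution (Cauchy) product of coefficient functions of noncommutative
formal power series, indexed by words. -/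
def conv {σ : Type*} (f g : List σ → ℤ) : List σ → ℤ :=
  fun w => ∑ i ∈ Finset.range (w.length + 1), f (w.take i) * g (w.drop i)

/-- The power series `1`. -/
def oneSeries {σ : Type*} [DecidableEq σ] : List σ → ℤ := fun w => if w = [] then 1 else 0

/-- Magnus series of a single generator (`b = true`: `1 + X_i`) or its inverse
(`b = false`: `1 - X_i + X_i^2 - ⋯`). -/
def genSeries {σ : Type*} [DecidableEq σ] (i : σ) (b : Bool) : List σ → ℤ :=
  fun w =>
    if w = List.replicate w.length i then
      (if b then (if w.length ≤ 1 then 1 else 0) else (-1) ^ w.length)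
    else 0

/-- The Magnus expansion of an element of the free group, as the coefficient
function of a noncommutative formal power series. -/
def magnus {σ : Type*} [DecidableEq σ] (w : FreeGroup σ) : List σ → ℤ :=
  (w.toWord.map fun p => genSeries p.1 p.2).foldr conv oneSeries

namespace MagnusAux

variable {σ : Type*} [DecidableEq σ]

/-- Sign of a letter. -/
def sg (b : Bool) : ℤ := if b then 1 else -1

lemma sg_mul_sg (b : Bool) : sg b * sg b = 1 := by cases b <;> simp [sg]

lemma genSeries_nil (i : σ) (b : Bool) : genSeries i b [] = 1 := by
  cases b <;> simp [genSeries]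

lemma genSeries_single (i : σ) (b : Bool) (j : σ) :
    genSeries i b [j] = if j = i then sg b else 0 := by
  by_cases h : j = i <;> cases b <;> simp [genSeries, sg, h, List.replicate]

lemma conv_genSeries (i : σ) (b : Bool) (f : List σ → ℤ) (u : List σ)
    (hu : u.Chain' (· ≠ ·)) :
    conv (genSeries i b) f u =
      f u + (if u.head? = some i then sg b * f u.tail else 0) := by
  cases u with
  | nil => simp [conv, genSeries_nil]
  | cons x v =>
    have hzero : ∀ m < v.length,
        genSeries i b ((x :: v).take (m + 1 + 1)) = 0 := by
      intro m hm
      apply if_neg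
      intro hrep
      rw [List.eq_replicate_iff] at hrep
      obtain ⟨-, hrep⟩ := hrep
      cases v with
      | nil => simp at hm
      | cons y w =>
        have hx : x = i := hrep x (by simp)
        have hy : y = i := hrep y (by simp)
        have := (List.isChain_cons_cons.mp hu).1
        exact this (hx.trans hy.symm)
    show (∑ m ∈ Finset.range (v.length + 1 + 1), _) = _
    rw [Finset.sum_range_succ']
    rw [Finset.sum_range_succ']
    have h2 : (∑ m ∈ Finset.range v.length,
        genSeries i b ((x :: v).take (m + 1 + 1)) * f ((x :: v).drop (m + 1 + 1))) = 0 := by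
      apply Finset.sum_eq_zero
      intro m hm
      rw [hzero m (Finset.mem_range.mp hm), zero_mul]
    rw [h2, zero_add]
    simp only [List.take_zero, List.drop_zero, genSeries_nil, one_mul]
    rw [List.take_succ_cons, List.take_zero, List.drop_succ_cons, List.drop_zero,
      genSeries_single]
    by_cases h : x = i <;> simp [h, add_comm]

/-- The partial Magnus product over a word in the letters. -/
def P (ℓ : List (σ × Bool)) : List σ → ℤ :=
  (ℓ.map fun p => genSeries p.1 p.2).foldr conv oneSeries

lemma P_nil (u : List σ) : P ([] : List (σ × Bool)) u = oneSeries u := rfl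

lemma P_cons (i : σ) (b : Bool) (t : List (σ × Bool)) (u : List σ)
    (hu : u.Chain' (· ≠ ·)) :
    P ((i, b) :: t) u = P t u + (if u.head? = some i then sg b * P t u.tail else 0) :=
  conv_genSeries i b (P t) u hu

/-- The block word of a word: its generators with adjacent duplicates removed. -/
def blk (ℓ : List (σ × Bool)) : List σ := (ℓ.map Prod.fst).destutter (· ≠ ·)

lemma destutter_head (x : σ) (L : List σ) :
    ((x :: L).destutter (· ≠ ·)).head? = some x := by
  rw [List.destutter_cons']
  induction L generalizing x with
  | nil => rfl
  | cons y t ih =>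
    by_cases h : x ≠ y
    · rw [List.destutter'_cons_pos _ h]; rfl
    · rw [List.destutter'_cons_neg _ h]; exact ih x

lemma blk_head (i : σ) (b : Bool) (t : List (σ × Bool)) :
    (blk ((i, b) :: t)).head? = some i :=
  destutter_head i (t.map Prod.fst)

lemma blk_chain (ℓ : List (σ × Bool)) : (blk ℓ).Chain' (· ≠ ·) :=
  List.isChain_destutter _ _

lemma blk_cons_same (i : σ) (b c : Bool) (t : List (σ × Bool)) :
    blk ((i, b) :: (i, c) :: t) = blk ((i, c) :: t) := by
  show ((i :: i :: t.map Prod.fst).destutter (· ≠ ·)) = _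
  rw [List.destutter_cons_cons, if_neg (by simp)]
  rfl

lemma blk_cons_ne {i j : σ} (hji : j ≠ i) (b c : Bool) (t : List (σ × Bool)) :
    blk ((i, b) :: (j, c) :: t) = i :: blk ((j, c) :: t) := by
  show ((i :: j :: t.map Prod.fst).destutter (· ≠ ·)) = _
  rw [List.destutter_cons_cons, if_pos hji.symm]
  rfl

/-- Reducedness, as a chain condition. -/
def Rel : (σ × Bool) → (σ × Bool) → Prop := fun p q => p.1 = q.1 → p.2 = q.2

lemma chain'_of_reduce (L : List (σ × Bool)) (h : FreeGroup.reduce L = L) :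
    L.Chain' Rel := by
  induction L with
  | nil => exact List.isChain_nil
  | cons x t ih =>
    rw [FreeGroup.reduce.cons] at h
    cases hrt : FreeGroup.reduce t with
    | nil =>
      rw [hrt] at h
      have ht : t = [] := by
        have := congrArg List.length h
        simpa using this.symm
      subst ht; exact List.isChain_singleton x
    | cons hd tl =>
      rw [hrt] at h
      dsimp only at h
      by_cases hc : x.1 = hd.1 ∧ x.2 = !hd.2
      · rw [if_pos hc] at h
        exfalso
        have hle := FreeGroup.Red.length_le (FreeGroup.reduce.red (L := t))
        rw [hrt] at hle
        have := congrArg List.length h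
        simp at this hle
        omega
      · rw [if_neg hc] at h
        have ht : t = hd :: tl := by
          have := (List.cons.injEq x (hd :: tl) x t).mp h
          exact this.2.symm
        have hred : FreeGroup.reduce t = t := by rw [hrt, ht]
        refine List.isChain_cons.mpr ⟨?_, ih hred⟩
        intro y hy h1
        rw [ht] at hy
        simp at hy
        subst hy
        by_contra h2
        exact hc ⟨h1, by revert h2; cases x.2 <;> cases hd.2 <;> simp⟩

/-- Product of one sign per block. -/
def eps : List (σ × Bool) → ℤ
  | [] => 1
  | (i, b) :: t => (if (t.map Prod.fst).head? = some i then 1 else sg b) * eps t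

/-- Product of one sign per block, excluding the first block. -/
def epsTail : List (σ × Bool) → ℤ
  | [] => 1
  | (i, _) :: t => if (t.map Prod.fst).head? = some i then epsTail t else eps t

lemma eps_eq (t : List (σ × Bool)) : ∀ i b, ((i, b) :: t).Chain' Rel →
    eps ((i, b) :: t) = sg b * epsTail ((i, b) :: t) := by
  induction t with
  | nil => intro i b _; simp [eps, epsTail]
  | cons q t' ih =>
    obtain ⟨j, c⟩ := q
    intro i b hred
    by_cases hji : j = i
    · subst hji
      have hcb : b = c := (List.isChain_cons_cons.mp hred).1 rfl
      subst hcb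
      simp only [eps, epsTail, List.map_cons, List.head?_cons]
      rw [if_pos trivial, if_pos trivial, one_mul]
      exact ih j b (List.IsChain.tail hred)
    · simp [eps, epsTail, hji]

/-- Vanishing of coefficients on words longer than the block word. -/
lemma P_append (ℓ : List (σ × Bool)) (hred : ℓ.Chain' Rel) :
    ∀ w : List σ, w ≠ [] → (w ++ blk ℓ).Chain' (· ≠ ·) → P ℓ (w ++ blk ℓ) = 0 := by
  induction ℓ with
  | nil =>
    intro w hw _
    show oneSeries (w ++ blk ([] : List (σ × Bool))) = 0
    simp [blk, oneSeries, hw]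
  | cons p t ih =>
    obtain ⟨i, b⟩ := p
    intro w hw hchain
    rw [P_cons i b t _ hchain]
    cases t with
    | nil =>
      obtain ⟨a, w', rfl⟩ := List.exists_cons_of_ne_nil hw
      have hb : blk [(i, b)] = [i] := rfl
      rw [hb] at hchain ⊢
      have h1 : P ([] : List (σ × Bool)) ((a :: w') ++ [i]) = 0 := by
        rw [P_nil]; simp [oneSeries]
      rw [h1, zero_add]
      by_cases hhd : ((a :: w') ++ [i]).head? = some i
      · rw [if_pos hhd]
        have h2 : P ([] : List (σ × Bool)) (((a :: w') ++ [i]).tail) = 0 := by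
          rw [P_nil]; simp [oneSeries]
        rw [h2, mul_zero]
      · rw [if_neg hhd]
    | cons q t' =>
      obtain ⟨j, c⟩ := q
      by_cases hji : j = i
      · subst hji
        rw [blk_cons_same] at hchain ⊢
        have h1 : P ((j, c) :: t') (w ++ blk ((j, c) :: t')) = 0 :=
          ih (List.IsChain.tail hred) w hw hchain
        rw [h1, zero_add]
        by_cases hhd : (w ++ blk ((j, c) :: t')).head? = some j
        · rw [if_pos hhd]
          obtain ⟨a, w', rfl⟩ := List.exists_cons_of_ne_nil hw
          have ha : a = j := by simpa using hhd
          subst ha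
          cases w' with
          | nil =>
            exfalso
            have hj := (List.isChain_cons.mp hchain).1
            have hmem : a ∈ (blk ((a, c) :: t')).head? := by
              rw [blk_head]; rfl
            exact hj a hmem rfl
          | cons a' w'' =>
            have h2 : P ((a, c) :: t') ((a' :: w'') ++ blk ((a, c) :: t')) = 0 :=
              ih (List.IsChain.tail hred) (a' :: w'') (by simp)
                (List.IsChain.tail hchain)
            have ht : ((a :: a' :: w'') ++ blk ((a, c) :: t')).tail
                = (a' :: w'') ++ blk ((a, c) :: t') := rfl
            rw [ht, h2, mul_zero]
        · rw [if_neg hhd]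
      · rw [blk_cons_ne hji] at hchain ⊢
        have hassoc : w ++ i :: blk ((j, c) :: t')
            = (w ++ [i]) ++ blk ((j, c) :: t') := by simp
        have h1 : P ((j, c) :: t') (w ++ i :: blk ((j, c) :: t')) = 0 := by
          rw [hassoc]
          exact ih (List.IsChain.tail hred) (w ++ [i]) (by simp)
            (by rw [← hassoc]; exact hchain)
        rw [h1, zero_add]
        by_cases hhd : (w ++ i :: blk ((j, c) :: t')).head? = some i
        · rw [if_pos hhd]
          obtain ⟨a, w', rfl⟩ := List.exists_cons_of_ne_nil hw
          have ht : ((a :: w') ++ i :: blk ((j, c) :: t')).tail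
              = (w' ++ [i]) ++ blk ((j, c) :: t') := by simp
          rw [ht]
          have h2 : P ((j, c) :: t') ((w' ++ [i]) ++ blk ((j, c) :: t')) = 0 := by
            apply ih (List.IsChain.tail hred) (w' ++ [i]) (by simp)
            have := List.IsChain.tail hchain
            show List.IsChain _ _
            simpa using this
          rw [h2, mul_zero]
        · rw [if_neg hhd]

/-- Key positivity: for a reduced word, the coefficient at the block word (resp. its
tail) times the block sign (resp. tail block sign) is at least 1. -/
lemma P_pos (ℓ : List (σ × Bool)) (hred : ℓ.Chain' Rel) :
    1 ≤ eps ℓ * P ℓ (blk ℓ) ∧ 1 ≤ epsTail ℓ * P ℓ (blk ℓ).tail := by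
  induction ℓ with
  | nil =>
    constructor <;> · rw [P_nil]; simp [eps, epsTail, blk, oneSeries]
  | cons p t ih =>
    obtain ⟨i, b⟩ := p
    cases t with
    | nil =>
      have hb : blk [(i, b)] = [i] := rfl
      have heps : eps [(i, b)] = sg b := by
        simp only [eps, List.map_nil, List.head?_nil]
        rw [if_neg (by simp), mul_one]
      have hepsT : epsTail [(i, b)] = 1 := by
        simp only [epsTail, List.map_nil, List.head?_nil]
        rw [if_neg (by simp)]
        rfl
      constructor
      · rw [hb, heps, P_cons i b [] [i] (List.isChain_singleton i), P_nil, P_nil]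
        have h0 : oneSeries [i] = 0 := by simp [oneSeries]
        have h1 : oneSeries ([] : List σ) = 1 := by simp [oneSeries]
        simp only [List.head?_cons, List.tail_cons]
        rw [if_pos trivial, h0, h1, mul_one, zero_add, sg_mul_sg]
      · rw [hb, hepsT, List.tail_cons,
          P_cons i b [] [] List.isChain_nil, P_nil, P_nil]
        have h1 : oneSeries ([] : List σ) = 1 := by simp [oneSeries]
        simp only [List.head?_nil]
        simp [h1]
    | cons q t' =>
      obtain ⟨j, c⟩ := q
      have ih2 := ih (List.IsChain.tail hred)
      by_cases hji : j = i
      · subst hji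
        have hcb : b = c := (List.isChain_cons_cons.mp hred).1 rfl
        subst hcb
        have hblk : blk ((j, b) :: (j, b) :: t') = blk ((j, b) :: t') :=
          blk_cons_same j b b t'
        have hhead : (blk ((j, b) :: t')).head? = some j := blk_head j b t'
        obtain ⟨z, r, hbt⟩ : ∃ z r, blk ((j, b) :: t') = z :: r := by
          cases hbt : blk ((j, b) :: t') with
          | nil => rw [hbt] at hhead; exact absurd hhead (by simp)
          | cons z r => exact ⟨z, r, rfl⟩
        have hz : z = j := by rw [hbt] at hhead; simpa using hhead
        subst hz
        have heps : eps ((z, b) :: (z, b) :: t') = eps ((z, b) :: t') := by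
          simp only [eps, List.map_cons, List.head?_cons]
          rw [if_pos trivial, one_mul]
        have hepsT : epsTail ((z, b) :: (z, b) :: t') = epsTail ((z, b) :: t') := by
          simp only [epsTail, List.map_cons, List.head?_cons]
          rw [if_pos trivial]
        have e1 : eps ((z, b) :: t') = sg b * epsTail ((z, b) :: t') :=
          eps_eq t' z b (List.IsChain.tail hred)
        have hrne : ¬(r.head? = some z) := by
          intro hr
          have hch := blk_chain ((z, b) :: t')
          rw [hbt] at hch
          exact (List.isChain_cons.mp hch).1 z hr rfl
        rw [hbt] at ih2
        simp only [List.tail_cons] at ih2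
        constructor
        · rw [hblk, hbt, heps,
            P_cons z b ((z, b) :: t') (z :: r) (hbt ▸ blk_chain ((z, b) :: t'))]
          simp only [List.head?_cons, List.tail_cons]
          rw [if_pos trivial]
          have expand : eps ((z, b) :: t') *
              (P ((z, b) :: t') (z :: r) + sg b * P ((z, b) :: t') r)
              = eps ((z, b) :: t') * P ((z, b) :: t') (z :: r)
                + epsTail ((z, b) :: t') * P ((z, b) :: t') r := by
            linear_combination (sg b * P ((z, b) :: t') r) * e1
              + (epsTail ((z, b) :: t') * P ((z, b) :: t') r) * sg_mul_sg b
          rw [expand]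
          linarith [ih2.1, ih2.2]
        · rw [hblk, hbt, List.tail_cons, hepsT,
            P_cons z b ((z, b) :: t') r (hbt ▸ blk_chain ((z, b) :: t')).tail]
          rw [if_neg hrne, add_zero]
          exact ih2.2
      · have hblk : blk ((i, b) :: (j, c) :: t') = i :: blk ((j, c) :: t') :=
          blk_cons_ne hji b c t'
        have hheadt : (blk ((j, c) :: t')).head? = some j := blk_head j c t'
        have heps : eps ((i, b) :: (j, c) :: t') = sg b * eps ((j, c) :: t') := by
          simp only [eps, List.map_cons, List.head?_cons]
          rw [if_neg (by simp [hji])]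
        have hepsT : epsTail ((i, b) :: (j, c) :: t') = eps ((j, c) :: t') := by
          simp only [epsTail, List.map_cons, List.head?_cons]
          rw [if_neg (by simp [hji])]
        have hchainl : (i :: blk ((j, c) :: t')).Chain' (· ≠ ·) :=
          hblk ▸ blk_chain ((i, b) :: (j, c) :: t')
        constructor
        · rw [hblk, heps,
            P_cons i b ((j, c) :: t') (i :: blk ((j, c) :: t')) hchainl]
          simp only [List.head?_cons, List.tail_cons]
          rw [if_pos trivial]
          have h0 : P ((j, c) :: t') (i :: blk ((j, c) :: t')) = 0 :=
            P_append ((j, c) :: t') (List.IsChain.tail hred) [i] (by simp) hchainl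
          rw [h0, zero_add]
          have hrw : sg b * eps ((j, c) :: t') * (sg b * P ((j, c) :: t') (blk ((j, c) :: t')))
              = eps ((j, c) :: t') * P ((j, c) :: t') (blk ((j, c) :: t')) := by
            linear_combination
              (eps ((j, c) :: t') * P ((j, c) :: t') (blk ((j, c) :: t'))) * sg_mul_sg b
          rw [hrw]
          exact ih2.1
        · rw [hblk, List.tail_cons, hepsT,
            P_cons i b ((j, c) :: t') (blk ((j, c) :: t')) (blk_chain ((j, c) :: t'))]
          rw [if_neg (by rw [hheadt]; simp [hji]), add_zero]
          exact ih2.1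

end MagnusAux

/-- An element of the free group `F(r)` is trivial iff its Magnus expansion is `1`. -/
theorem magnus_eq_one_iff {r : ℕ} (w : FreeGroup (Fin r)) :
    w = 1 ↔ magnus w = oneSeries := by
  constructor
  · rintro rfl
    show (List.map _ (1 : FreeGroup (Fin r)).toWord).foldr conv oneSeries = oneSeries
    rw [FreeGroup.toWord_one]
    rfl
  · intro h
    by_contra hne
    have hnil : w.toWord ≠ [] := fun hn => hne (FreeGroup.toWord_eq_nil_iff.mp hn)
    have hred : w.toWord.Chain' MagnusAux.Rel :=
      MagnusAux.chain'_of_reduce _ (FreeGroup.reduce_toWord w)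
    have hpos := (MagnusAux.P_pos w.toWord hred).1
    have hmag : MagnusAux.P w.toWord = magnus w := rfl
    rw [hmag, h] at hpos
    have hbne : MagnusAux.blk w.toWord ≠ [] := by
      intro hb
      rw [MagnusAux.blk, List.destutter_eq_nil, List.map_eq_nil_iff] at hb
      exact hnil hb
    rw [show oneSeries (MagnusAux.blk w.toWord) = 0 from if_neg hbne] at hpos
    simp at hpos
end

section
/- Let w = x_{i_1}^{p_1} ⋯ x_{i_s}^{p_s} be a freely reduced nonempty word in the free group F(r), where each p_j is a nonzero integer and consecutive indices satisfy i_k ≠ i_{k+1}. Then in the Magnus expansion E(w), the coefficient of the monomial X_{i_1} X_{i_2} ⋯ X_{i_s} is p_1 p_2 ⋯ p_s, which is nonzero; in particular E(w) ≠ 1. -/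
open scoped BigOperators

section MagnusAux

variable {σ : Type*} [DecidableEq σ]

def SER (L : List (σ × Bool)) : List σ → ℤ :=
  (L.map fun q => genSeries q.1 q.2).foldr conv oneSeries

lemma SER_nil : SER ([] : List (σ × Bool)) = oneSeries := rfl

lemma SER_cons (q : σ × Bool) (L : List (σ × Bool)) :
    SER (q :: L) = conv (genSeries q.1 q.2) (SER L) := rfl

lemma conv_genSeries (i : σ) (b : Bool) (g : List σ → ℤ) (w : List σ)
    (hw : w.Chain' (· ≠ ·)) :
    conv (genSeries i b) g w =
      g w + (if w.head? = some i then (if b then (1:ℤ) else -1) * g w.tail else 0) := by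
  cases w with
  | nil => simp [conv, genSeries]
  | cons a t =>
    have : conv (genSeries i b) g (a :: t) =
        ∑ k ∈ Finset.range (t.length + 1 + 1),
          genSeries i b ((a :: t).take k) * g ((a :: t).drop k) := rfl
    rw [this, Finset.sum_range_succ', Finset.sum_range_succ']
    have hzero : ∀ k ∈ Finset.range t.length,
        genSeries i b ((a :: t).take (k + 1 + 1)) * g ((a :: t).drop (k + 1 + 1)) = 0 := by
      intro k hk
      simp only [Finset.mem_range] at hk
      cases t with
      | nil => simp at hk
      | cons c t' =>
        have hac : a ≠ c := (List.isChain_cons_cons.mp hw).1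
        have htake : (a :: c :: t').take (k + 1 + 1) = a :: c :: t'.take k := rfl
        rw [htake]
        have : genSeries i b (a :: c :: t'.take k) = 0 := by
          rw [genSeries]
          rw [if_neg]
          simp only [List.length_cons, List.replicate_succ, List.cons.injEq]
          rintro ⟨rfl, rfl, -⟩
          exact hac rfl
        rw [this, zero_mul]
    rw [Finset.sum_eq_zero hzero, zero_add]
    have h0 : genSeries i b ((a :: t).take 0) * g ((a :: t).drop 0) = g (a :: t) := by
      simp [genSeries]
    have h1 : genSeries i b ((a :: t).take (0 + 1)) * g ((a :: t).drop (0 + 1)) =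
        (if a = i then (if b then (1:ℤ) else -1) else 0) * g t := by
      have : genSeries i b [a] = (if a = i then (if b then (1:ℤ) else -1) else 0) := by
        rw [genSeries]
        simp only [List.length_cons, List.length_nil, List.replicate_succ, List.replicate_zero]
        by_cases hai : a = i <;> cases b <;> simp [hai]
      simp [this]
    rw [h0, h1]
    simp only [List.head?_cons, List.tail_cons, Option.some.injEq]
    by_cases hai : a = i <;> simp [hai] <;> ring

lemma SER_replicate_append (m : ℕ) (i : σ) (b : Bool) (L : List (σ × Bool)) (w : List σ)
    (hw : w.Chain' (· ≠ ·)) (hne : w.head? ≠ some i) :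
    SER (List.replicate m (i, b) ++ L) w = SER L w := by
  induction m with
  | zero => rfl
  | succ m ih =>
    rw [List.replicate_succ, List.cons_append, SER_cons,
      conv_genSeries _ _ _ _ hw, if_neg hne, add_zero, ih]

def blockLetters (q : σ × ℕ × Bool) : List (σ × Bool) := List.replicate q.2.1 (q.1, q.2.2)

def letters (bs : List (σ × ℕ × Bool)) : List (σ × Bool) := (bs.map blockLetters).flatten

def blockVal (q : σ × ℕ × Bool) : ℤ := if q.2.2 then (q.2.1 : ℤ) else -(q.2.1 : ℤ)

lemma letters_nil : letters ([] : List (σ × ℕ × Bool)) = [] := rfl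

lemma letters_cons (q : σ × ℕ × Bool) (bs : List (σ × ℕ × Bool)) :
    letters (q :: bs) = List.replicate q.2.1 (q.1, q.2.2) ++ letters bs := by
  simp [letters, blockLetters]

lemma mainF : ∀ (k : ℕ) (bs : List (σ × ℕ × Bool)), (letters bs).length = k →
    (∀ q ∈ bs, 1 ≤ q.2.1) → ∀ w : List σ, w.Chain' (· ≠ ·) →
    (bs.length < w.length → SER (letters bs) w = 0) ∧
    (w.length = bs.length → SER (letters bs) w =
      if w = bs.map (·.1) then (bs.map blockVal).prod else 0) := by
  intro k
  induction k using Nat.strong_induction_on with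
  | _ k IH =>
  have IH' : ∀ bs' : List (σ × ℕ × Bool), (letters bs').length < k →
      (∀ q ∈ bs', 1 ≤ q.2.1) → ∀ w' : List σ, w'.Chain' (· ≠ ·) →
      (bs'.length < w'.length → SER (letters bs') w' = 0) ∧
      (w'.length = bs'.length → SER (letters bs') w' =
        if w' = bs'.map (·.1) then (bs'.map blockVal).prod else 0) :=
    fun bs' h hp w' hw' => IH _ h bs' rfl hp w' hw'
  intro bs hk hpos w hw
  match bs with
  | [] =>
    constructor
    · intro h
      cases w with
      | nil => simp at h
      | cons a t => simp [letters_nil, SER_nil, oneSeries]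
    · intro h
      have : w = [] := List.length_eq_zero_iff.mp h
      subst this
      simp [letters_nil, SER_nil, oneSeries]
  | (x, n, b) :: rest =>
    obtain ⟨m, rfl⟩ : ∃ m, n = m + 1 :=
      ⟨n - 1, by have h := hpos (x, n, b) (by simp); simp at h; omega⟩
    have hposr : ∀ q ∈ rest, 1 ≤ q.2.1 := fun q hq => hpos q (by simp [hq])
    -- lengths
    have hkcons : (letters ((x, m + 1, b) :: rest)).length = k := hk
    have hlen1 : (letters ((x, m + 1, b) :: rest)).length = m + 1 + (letters rest).length := by
      rw [letters_cons]; simp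
    have hlen2 : (letters ((x, m, b) :: rest)).length = m + (letters rest).length := by
      rw [letters_cons]; simp
    have hlenMlt : (letters ((x, m, b) :: rest)).length < k := by omega
    have hlenrlt : (letters rest).length < k := by omega
    -- the one-letter peel
    have hstep : ∀ w' : List σ, w'.Chain' (· ≠ ·) →
        SER (letters ((x, m + 1, b) :: rest)) w' =
          SER (letters ((x, m, b) :: rest)) w' +
            (if w'.head? = some x then
              (if b then (1:ℤ) else -1) * SER (letters ((x, m, b) :: rest)) w'.tail else 0) := by
      intro w' hw'
      have h1 : letters ((x, m + 1, b) :: rest) = (x, b) :: letters ((x, m, b) :: rest) := by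
        rw [letters_cons, letters_cons, List.replicate_succ, List.cons_append]
      rw [h1, SER_cons]
      exact conv_genSeries x b _ w' hw'
    -- letters (x,m,b)::rest as replicate m ++ letters rest
    have hMrep : letters ((x, m, b) :: rest) = List.replicate m (x, b) ++ letters rest :=
      letters_cons _ _
    -- peel whole M when head isn't x
    have hpeel : ∀ w' : List σ, w'.Chain' (· ≠ ·) → w'.head? ≠ some x →
        SER (letters ((x, m, b) :: rest)) w' = SER (letters rest) w' := by
      intro w' hw' hne
      rw [hMrep]
      exact SER_replicate_append m x b _ w' hw' hne
    -- value of SER lettersM at words of length ≥ rest.length+1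
    have hT1a : ∀ w' : List σ, w'.Chain' (· ≠ ·) → rest.length + 1 < w'.length →
        SER (letters ((x, m, b) :: rest)) w' = 0 := by
      intro w' hw' hlw
      rcases Nat.eq_zero_or_pos m with hm | hm
      · subst hm
        rw [hMrep, List.replicate_zero, List.nil_append]
        exact (IH' rest hlenrlt hposr w' hw').1 (by omega)
      · refine (IH' ((x, m, b) :: rest) hlenMlt ?_ w' hw').1 (by simpa using hlw)
        intro q hq
        rcases List.mem_cons.mp hq with rfl | hq
        · exact hm
        · exact hposr q hq
    have hT1b : ∀ w' : List σ, w'.Chain' (· ≠ ·) → w'.length = rest.length + 1 →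
        SER (letters ((x, m, b) :: rest)) w' =
          if w' = x :: rest.map (·.1) then
            (if b then (m : ℤ) else -(m : ℤ)) * (rest.map blockVal).prod else 0 := by
      intro w' hw' hlw
      rcases Nat.eq_zero_or_pos m with hm | hm
      · subst hm
        rw [hMrep, List.replicate_zero, List.nil_append]
        rw [(IH' rest hlenrlt hposr w' hw').1 (by omega)]
        simp
      · have hpos' : ∀ q ∈ (x, m, b) :: rest, 1 ≤ q.2.1 := by
          intro q hq
          rcases List.mem_cons.mp hq with rfl | hq
          · exact hm
          · exact hposr q hq
        rw [(IH' ((x, m, b) :: rest) hlenMlt hpos' w' hw').2 (by simpa using hlw)]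
        simp [blockVal]
    -- tail facts
    constructor
    · -- part (a)
      intro hlt
      simp only [List.length_cons] at hlt
      cases w with
      | nil => simp at hlt
      | cons a t =>
        rw [hstep _ hw]
        rw [hT1a _ hw (by simpa using hlt)]
        simp only [List.head?_cons, List.tail_cons, Option.some.injEq, zero_add]
        by_cases hax : a = x
        · subst hax
          rw [if_pos rfl]
          have htc : t.Chain' (· ≠ ·) := hw.tail
          have htne : t.head? ≠ some a := by
            cases t with
            | nil => simp
            | cons c t' =>
              have : a ≠ c := (List.isChain_cons_cons.mp hw).1
              simp [this.symm]
          rw [hpeel t htc htne]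
          rw [(IH' rest hlenrlt hposr t htc).1 (by simp at hlt ⊢; omega)]
          ring
        · rw [if_neg (by simpa using hax)]
    · -- part (b)
      intro hlen
      simp only [List.length_cons] at hlen
      cases w with
      | nil => simp at hlen
      | cons a t =>
        simp only [List.length_cons] at hlen
        rw [hstep _ hw, hT1b _ hw (by simp; omega)]
        simp only [List.head?_cons, List.tail_cons, Option.some.injEq, List.map_cons,
          List.prod_cons]
        have htc : t.Chain' (· ≠ ·) := hw.tail
        by_cases hax : a = x
        · subst hax
          have htne : t.head? ≠ some a := by
            cases t with
            | nil => simp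
            | cons c t' =>
              have : a ≠ c := (List.isChain_cons_cons.mp hw).1
              simp [this.symm]
          rw [if_pos rfl, hpeel t htc htne, (IH' rest hlenrlt hposr t htc).2 (by omega)]
          by_cases hteq : t = rest.map (·.1)
          · have h1 : a :: t = a :: List.map (fun q => q.1) rest := by rw [hteq]
            rw [if_pos h1, if_pos hteq, if_pos h1]
            simp only [blockVal]
            cases b <;> simp <;> push_cast <;> ring
          · have h1 : ¬(a :: t = a :: List.map (fun q => q.1) rest) := by simp [hteq]
            rw [if_neg h1, if_neg hteq, if_neg h1]
            ring
        · have h2 : ¬((a :: t : List σ) = x :: List.map (fun q => q.1) rest) := by simp [hax]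
          have h3 : ¬(a = x) := hax
          rw [if_neg h2, if_neg h3, if_neg h2]
          ring

lemma mk_single_pow (a : σ × Bool) (n : ℕ) :
    FreeGroup.mk [a] ^ n = FreeGroup.mk (List.replicate n a) := by
  induction n with
  | zero => rw [pow_zero, List.replicate_zero, FreeGroup.one_eq_mk]
  | succ n ih =>
    rw [pow_succ, ih, FreeGroup.mul_mk, List.replicate_succ' (n := n) (a := a)]

lemma of_zpow (x : σ) (q : ℤ) :
    FreeGroup.of x ^ q = FreeGroup.mk (List.replicate q.natAbs (x, decide (0 < q))) := by
  have hof : FreeGroup.of x = FreeGroup.mk [(x, true)] := rfl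
  rcases lt_trichotomy 0 q with hq | rfl | hq
  · rw [show decide (0 < q) = true by simpa using hq,
      show q = (q.natAbs : ℤ) by omega, zpow_natCast, hof, mk_single_pow]
    rw [Int.natAbs_natCast]
  · rw [zpow_zero, FreeGroup.one_eq_mk]
    rfl
  · rw [show decide (0 < q) = false by simp; omega]
    have h2 : FreeGroup.of x ^ q = (FreeGroup.of x ^ (q.natAbs : ℤ))⁻¹ := by
      rw [← zpow_neg]
      congr 1
      omega
    rw [h2, zpow_natCast, hof, mk_single_pow, FreeGroup.inv_mk]
    congr 1
    simp [FreeGroup.invRev, List.map_replicate]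

lemma prod_mk (Ls : List (List (σ × Bool))) :
    (Ls.map FreeGroup.mk).prod = FreeGroup.mk Ls.flatten := by
  induction Ls with
  | nil => rw [List.map_nil, List.prod_nil, List.flatten_nil, FreeGroup.one_eq_mk]
  | cons L Ls ih => rw [List.map_cons, List.prod_cons, ih, FreeGroup.mul_mk, List.flatten_cons]

lemma reduce_eq_self_of_chain (L : List (σ × Bool))
    (h : L.Chain' fun a b => ¬(a.1 = b.1 ∧ a.2 = !b.2)) : FreeGroup.reduce L = L := by
  induction L with
  | nil => simp
  | cons x L ih =>
    rw [FreeGroup.reduce.cons, ih h.tail]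
    cases L with
    | nil => rfl
    | cons y tl =>
      have hxy := (List.isChain_cons_cons.mp h).1
      simp [hxy]

lemma chain_letters (bs : List (σ × ℕ × Bool)) (hpos : ∀ q ∈ bs, 1 ≤ q.2.1)
    (hadj : bs.Chain' fun a b => a.1 ≠ b.1) :
    (letters bs).Chain' fun a b => ¬(a.1 = b.1 ∧ a.2 = !b.2) := by
  induction bs with
  | nil => simp [letters]; exact List.isChain_nil
  | cons q bs ih =>
    obtain ⟨x, n, b⟩ := q
    have hbs : letters ((x, n, b) :: bs) = List.replicate n (x, b) ++ letters bs := by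
      simp [letters, blockLetters]
    rw [hbs]
    apply List.IsChain.append
    · -- chain on replicate
      have : ∀ m : ℕ, (List.replicate m (x, b)).Chain' fun a c => ¬(a.1 = c.1 ∧ a.2 = !c.2) := by
        intro m
        induction m with
        | zero => simp; exact List.isChain_nil
        | succ m ihm =>
          rw [List.replicate_succ]
          cases m with
          | zero => simp; exact List.isChain_singleton _
          | succ m' =>
            rw [List.replicate_succ]
            refine List.isChain_cons_cons.mpr ⟨?_, by rw [← List.replicate_succ]; exact ihm⟩
            simp
      exact this n
    · exact ih (fun q hq => hpos q (by simp [hq])) hadj.tail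
    · intro u hu v hv
      have hu' : u = (x, b) := List.eq_of_mem_replicate (List.mem_of_mem_getLast? hu)
      subst hu'
      cases bs with
      | nil => simp [letters] at hv
      | cons q2 bs2 =>
        obtain ⟨x2, n2, b2⟩ := q2
        obtain ⟨m2, rfl⟩ : ∃ m2, n2 = m2 + 1 := by
          have h := hpos (x2, n2, b2) (by simp); simp at h
          exact ⟨n2 - 1, by omega⟩
        have : letters ((x2, m2 + 1, b2) :: bs2) =
            (x2, b2) :: (List.replicate m2 (x2, b2) ++ letters bs2) := by
          simp [letters, blockLetters, List.replicate_succ]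
        rw [this] at hv
        simp only [List.head?_cons, Option.mem_def, Option.some.injEq] at hv
        subst hv
        have hne := (List.isChain_cons_cons.mp hadj).1
        simp at hne ⊢
        intro h; exact absurd h hne

lemma chain_ofFn_of_adj {α : Type*} {s : ℕ} (g : Fin s → α) (R : α → α → Prop)
    (h : ∀ (j : Fin s) (hj : j.val + 1 < s), R (g j) (g ⟨j.val + 1, hj⟩)) :
    (List.ofFn g).Chain' R := by
  show List.IsChain R _
  rw [List.isChain_iff_getElem]
  intro j hj
  simp only [List.length_ofFn] at hj
  simp only [List.getElem_ofFn]
  exact h ⟨j, by omega⟩ (by simpa using by omega)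

end MagnusAux

/-- For a freely reduced nonempty word `w = x_{i_1}^{p_1} ⋯ x_{i_s}^{p_s}`
(all `p_j ≠ 0`, consecutive indices distinct), the coefficient of
`X_{i_1} ⋯ X_{i_s}` in `E(w)` is `p_1 ⋯ p_s ≠ 0`; in particular `E(w) ≠ 1`. -/
theorem magnus_reduced_word (r s : ℕ) (hs : 0 < s) (i : Fin s → Fin r)
    (p : Fin s → ℤ) (hp : ∀ j, p j ≠ 0)
    (hadj : ∀ (j : Fin s) (h : j.val + 1 < s), i j ≠ i ⟨j.val + 1, h⟩) :
    magnus ((List.ofFn fun j => FreeGroup.of (i j) ^ p j).prod) (List.ofFn i)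
        = ∏ j, p j ∧
      (∏ j, p j) ≠ 0 ∧
      magnus ((List.ofFn fun j => FreeGroup.of (i j) ^ p j).prod) ≠ oneSeries := by
  classical
  set f : Fin s → (Fin r × ℕ × Bool) := fun j => (i j, (p j).natAbs, decide (0 < p j)) with hf
  set bs : List (Fin r × ℕ × Bool) := List.ofFn f with hbs
  have hpos' : ∀ q ∈ bs, 1 ≤ q.2.1 := by
    intro q hq
    rw [hbs, List.mem_ofFn] at hq
    obtain ⟨j, rfl⟩ := hq
    have := hp j
    show 1 ≤ (p j).natAbs
    omega
  have hadj' : bs.Chain' fun a c => a.1 ≠ c.1 := by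
    rw [hbs]
    exact chain_ofFn_of_adj f _ fun j hj => hadj j hj
  have hword : (List.ofFn fun j => FreeGroup.of (i j) ^ p j).prod = FreeGroup.mk (letters bs) := by
    have h1 : (List.ofFn fun j => FreeGroup.of (i j) ^ p j) =
        (List.ofFn fun j => blockLetters (f j)).map FreeGroup.mk := by
      rw [List.map_ofFn]
      congr 1
      funext j
      exact of_zpow (i j) (p j)
    rw [h1, prod_mk]
    congr 1
    rw [letters, hbs, List.map_ofFn]
    rfl
  have hred : (FreeGroup.mk (letters bs)).toWord = letters bs := by
    rw [FreeGroup.toWord_mk]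
    exact reduce_eq_self_of_chain _ (chain_letters bs hpos' hadj')
  have hmag : magnus ((List.ofFn fun j => FreeGroup.of (i j) ^ p j).prod) = SER (letters bs) := by
    show SER ((List.ofFn fun j => FreeGroup.of (i j) ^ p j).prod).toWord = _
    rw [hword, hred]
  have hwchain : (List.ofFn i).Chain' (· ≠ ·) :=
    chain_ofFn_of_adj i _ fun j hj => hadj j hj
  have hmap : bs.map (·.1) = List.ofFn i := by
    rw [hbs, List.map_ofFn]
    rfl
  have hprodval : (bs.map blockVal).prod = ∏ j, p j := by
    rw [hbs, List.map_ofFn, List.prod_ofFn]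
    refine Finset.prod_congr rfl fun j _ => ?_
    have := hp j
    rcases lt_or_ge 0 (p j) with h | h
    · have h1 : decide (0 < p j) = true := by simpa using h
      show blockVal (f j) = p j
      simp only [hf, blockVal, h1, if_true]
      rw [Int.natCast_natAbs, abs_of_pos h]
    · have h2 : decide (0 < p j) = false := decide_eq_false (not_lt.2 h)
      show blockVal (f j) = p j
      simp only [hf, blockVal, h2, Bool.false_eq_true, if_false]
      rw [Int.natCast_natAbs, abs_of_nonpos h]
      ring
  have hmain := (mainF (letters bs).length bs rfl hpos' (List.ofFn i) hwchain).2
    (by simp [hbs])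
  have hcoef : magnus ((List.ofFn fun j => FreeGroup.of (i j) ^ p j).prod) (List.ofFn i)
      = ∏ j, p j := by
    rw [hmag, hmain, if_pos hmap.symm, hprodval]
  have hne : (∏ j, p j) ≠ 0 := Finset.prod_ne_zero_iff.mpr fun j _ => hp j
  refine ⟨hcoef, hne, fun hEq => hne ?_⟩
  have := congrFun hEq (List.ofFn i)
  rw [hcoef] at this
  rw [this, oneSeries, if_neg]
  intro h
  have : (List.ofFn i).length = 0 := by rw [h]; rfl
  simp at this
  omega
end
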